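/- If I ≤_RK J are F_σ ideals and J is nonpathological (J = Fin(ψ) for some nonpathological lscsm ψ), then I is nonpathological. -/
import Mathlib


open scoped ENNReal

/-- A lower semicontinuous submeasure on ℕ. -/
def IsLSCSM (φ : Set ℕ → ℝ≥0∞) : Prop :=
  φ ∅ = 0 ∧ (∀ A B : Set ℕ, A ⊆ B → φ A ≤ φ B) ∧
    (∀ A B : Set ℕ, φ (A ∪ B) ≤ φ A + φ B) ∧
    (∀ n : ℕ, φ {n} < ⊤) ∧
    (∀ A : Set ℕ, φ A = ⨆ n : ℕ, φ (A ∩ Set.Iic n))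

/-- φ̂, the supremum of all measures dominated by φ. -/
noncomputable def hatSM (φ : Set ℕ → ℝ≥0∞) (A : Set ℕ) : ℝ≥0∞ :=
  ⨆ (m : ℕ → ℝ≥0∞) (_ : ∀ S : Set ℕ, (∑' n : S, m n) ≤ φ S), ∑' n : A, m n

/-- An ideal on ℕ containing all finite sets. -/
def IsIdeal (I : Set (Set ℕ)) : Prop :=
  ∅ ∈ I ∧ Set.univ ∉ I ∧ (∀ A ∈ I, ∀ B : Set ℕ, B ⊆ A → B ∈ I) ∧
    (∀ A ∈ I, ∀ B ∈ I, A ∪ B ∈ I) ∧ (∀ n : ℕ, {n} ∈ I)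

/-- Fibers of `f` over a set `S` decompose the preimage. -/
def fiberEquiv (f : ℕ → ℕ) (S : Set ℕ) :
    (Σ k : S, (f ⁻¹' {(k : ℕ)} : Set ℕ)) ≃ (f ⁻¹' S : Set ℕ) where
  toFun p := ⟨(p.2 : ℕ), by
    have h2 : f (p.2 : ℕ) = (p.1 : ℕ) := p.2.2
    have h1 : (p.1 : ℕ) ∈ S := p.1.2
    simpa [Set.mem_preimage, h2] using h1⟩
  invFun n := ⟨⟨f (n : ℕ), n.2⟩, ⟨(n : ℕ), rfl⟩⟩
  left_inv p := by
    obtain ⟨⟨k, hk⟩, ⟨n, hn⟩⟩ := p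
    simp only [Set.mem_preimage, Set.mem_singleton_iff] at hn
    subst hn
    rfl
  right_inv n := rfl

theorem fiber_tsum (f : ℕ → ℕ) (m : ℕ → ℝ≥0∞) (S : Set ℕ) :
    (∑' k : S, ∑' n : (f ⁻¹' {(k : ℕ)} : Set ℕ), m n) = ∑' n : (f ⁻¹' S : Set ℕ), m n := by
  rw [← ENNReal.tsum_sigma' (fun p : Σ k : S, (f ⁻¹' {(k : ℕ)} : Set ℕ) => m (p.2 : ℕ))]
  exact ((fiberEquiv f S).tsum_eq fun n : (f ⁻¹' S : Set ℕ) => m (n : ℕ)).symm ▸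
    tsum_congr (fun p => rfl)

theorem stmt10 (I J : Set (Set ℕ)) (hIid : IsIdeal I) (hJid : IsIdeal J)
    (f : ℕ → ℕ) (hRK : I = {A : Set ℕ | f ⁻¹' A ∈ J})
    (ψ : Set ℕ → ℝ≥0∞) (hψ : IsLSCSM ψ)
    (hnonpath : ∀ A : Set ℕ, ψ A = hatSM ψ A)
    (hJ : J = {A : Set ℕ | ψ A < ⊤}) :
    ∃ χ : Set ℕ → ℝ≥0∞, IsLSCSM χ ∧ (∀ A : Set ℕ, χ A = hatSM χ A) ∧
      I = {A : Set ℕ | χ A < ⊤} := by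
  obtain ⟨hψ0, hψmono, hψsub, hψsing, hψlsc⟩ := hψ
  refine ⟨fun A => ψ (f ⁻¹' A), ⟨?_, ?_, ?_, ?_, ?_⟩, ?_, ?_⟩
  · simpa using hψ0
  · intro A B hAB; exact hψmono _ _ (Set.preimage_mono hAB)
  · intro A B; simpa [Set.preimage_union] using hψsub (f ⁻¹' A) (f ⁻¹' B)
  · intro n
    have h1 : {n} ∈ I := hIid.2.2.2.2 n
    rw [hRK] at h1
    rw [hJ] at h1
    exact h1
  · -- lower semicontinuity
    intro A
    dsimp only
    apply le_antisymm
    · rw [hψlsc (f ⁻¹' A)]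
      apply iSup_le
      intro n
      rcases ((Finset.Iic n).image f).exists_le with ⟨M, hM⟩
      refine le_trans (hψmono _ _ ?_) (le_iSup (fun k => ψ (f ⁻¹' (A ∩ Set.Iic k))) M)
      intro x hx
      rcases hx with ⟨hxA, hxI⟩
      exact ⟨hxA, hM (f x) (Finset.mem_image_of_mem f (Finset.mem_Iic.mpr hxI))⟩
    · exact iSup_le fun n => hψmono _ _ (Set.preimage_mono Set.inter_subset_left)
  · -- nonpathological
    intro A
    dsimp only
    apply le_antisymm
    · rw [hnonpath (f ⁻¹' A)]
      apply iSup₂_le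
      intro m hm
      set m' : ℕ → ℝ≥0∞ := fun k => ∑' n : (f ⁻¹' {k} : Set ℕ), m n with hm'def
      have key : ∀ S : Set ℕ, (∑' k : S, m' k) = ∑' n : (f ⁻¹' S : Set ℕ), m n :=
        fun S => fiber_tsum f m S
      have hdom : ∀ S : Set ℕ, (∑' k : S, m' k) ≤ ψ (f ⁻¹' S) := by
        intro S; rw [key S]; exact hm _
      calc (∑' n : (f ⁻¹' A : Set ℕ), m n) = ∑' k : A, m' k := (key A).symm
        _ ≤ hatSM (fun A => ψ (f ⁻¹' A)) A := le_iSup₂ (f := fun m _ => ∑' n : A, m n) m' hdom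
    · exact iSup₂_le fun m hm => hm A
  · -- ideal equality
    rw [hRK]
    ext A
    simp only [Set.mem_setOf_eq]
    rw [hJ]
    rfl
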